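/- Let Y and X be normed spaces, let y be a point of the unit sphere S_Y of Y, let β > 0, and let ρ̲ : S_Y → X be a bounded continuous function that is pointwise β-Lipschitz at y (with S_Y carrying the metric induced from the norm of Y). Define ρ : Y → X by ρ(0) = 0 and ρ(z) = ‖z‖ · ρ̲(z/‖z‖) for z ≠ 0. Then ρ is continuous on Y and ρ is pointwise (2β + ‖ρ̲‖_∞)-Lipschitz at every point of the set { λ·y : λ > 0 } ⊆ Y, where ‖ρ̲‖_∞ = sup_{x ∈ S_Y} ‖ρ̲(x)‖. -/

import Mathlib

open Filter Metric Set
open scoped ENNReal Topology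

/-- `f` is pointwise `α`-Lipschitz at `b`:
`limsup_{r→0⁺} ( r⁻¹ · sup { d(f b, f a) : a ∈ closedBall b r } ) ≤ α`. -/
noncomputable def PtwiseLipschitzAt {M X : Type*} [PseudoMetricSpace M] [PseudoMetricSpace X]
    (f : M → X) (α : ℝ) (b : M) : Prop :=
  Filter.limsup
    (fun r : ℝ => (ENNReal.ofReal r)⁻¹ * ⨆ a ∈ Metric.closedBall b r, edist (f b) (f a))
    (nhdsWithin 0 (Set.Ioi 0)) ≤ ENNReal.ofReal α

section Aux
variable {Y : Type*} [NormedAddCommGroup Y] [NormedSpace ℝ Y]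

open scoped Classical in
noncomputable def sphProj (y : Metric.sphere (0 : Y) 1) (z : Y) : Metric.sphere (0 : Y) 1 :=
  if h : z = 0 then y else ⟨‖z‖⁻¹ • z, by
    rw [mem_sphere_zero_iff_norm, norm_smul, norm_inv, norm_norm,
      inv_mul_cancel₀ (norm_ne_zero_iff.2 h)]⟩

lemma sphProj_coe (y : Metric.sphere (0 : Y) 1) {z : Y} (h : z ≠ 0) :
    (sphProj y z : Y) = ‖z‖⁻¹ • z := by simp [sphProj, h]

lemma normalize_sub_le {z a : Y} (hz : z ≠ 0) (ha : a ≠ 0) :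
    ‖‖z‖⁻¹ • z - ‖a‖⁻¹ • a‖ ≤ 2 * ‖z - a‖ / ‖z‖ := by
  have hz' : (0:ℝ) < ‖z‖ := norm_pos_iff.2 hz
  have ha' : (0:ℝ) < ‖a‖ := norm_pos_iff.2 ha
  have key : ‖z‖⁻¹ • z - ‖a‖⁻¹ • a = ‖z‖⁻¹ • (z - a) + (‖z‖⁻¹ - ‖a‖⁻¹) • a := by
    rw [smul_sub, sub_smul]; abel
  have h2 : |‖a‖ - ‖z‖| ≤ ‖z - a‖ := by
    rw [abs_sub_comm]
    exact (abs_norm_sub_norm_le z a).trans (le_refl _)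
  have h3 : |‖z‖⁻¹ - ‖a‖⁻¹| * ‖a‖ ≤ ‖z - a‖ / ‖z‖ := by
    have he : ‖z‖⁻¹ - ‖a‖⁻¹ = (‖a‖ - ‖z‖) / (‖z‖ * ‖a‖) := by
      field_simp
    rw [he, abs_div, abs_of_pos (mul_pos hz' ha')]
    rw [div_mul_eq_mul_div, mul_comm ‖z‖ ‖a‖, ← div_div, mul_div_assoc, div_self ha'.ne', mul_one]
    gcongr
  rw [key]
  have h4 := norm_add_le (‖z‖⁻¹ • (z - a)) ((‖z‖⁻¹ - ‖a‖⁻¹) • a)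
  rw [norm_smul, norm_smul, norm_inv, norm_norm, Real.norm_eq_abs] at h4
  have h5 : ‖z‖⁻¹ * ‖z - a‖ = ‖z - a‖ / ‖z‖ := by rw [inv_mul_eq_div]
  have h6 : 2 * ‖z - a‖ / ‖z‖ = ‖z - a‖ / ‖z‖ + ‖z - a‖ / ‖z‖ := by ring
  linarith

variable {X : Type*} [NormedAddCommGroup X] [NormedSpace ℝ X]

lemma cont_homog_ext (y : Metric.sphere (0 : Y) 1) (f : Metric.sphere (0 : Y) 1 → X)
    (hfc : Continuous f) (hfb : BddAbove (Set.range fun x => ‖f x‖)) :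
    Continuous (fun z : Y => ‖z‖ • f (sphProj y z)) := by
  rw [continuous_iff_continuousAt]
  intro z₀
  by_cases h : z₀ = 0
  · subst h
    have hM : ∀ x, ‖f x‖ ≤ ⨆ x, ‖f x‖ := fun x => le_ciSup hfb x
    have ht : Tendsto (fun z : Y => ‖z‖ • f (sphProj y z)) (𝓝 0) (𝓝 0) := by
      have h1 : Tendsto (fun z : Y => ‖z‖) (𝓝 0) (𝓝 0) := by
        simpa using (continuous_norm (E := Y)).tendsto (0 : Y)
      refine squeeze_zero_norm (fun z => ?_) (by simpa using h1.mul_const (⨆ x, ‖f x‖))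
      rw [norm_smul, norm_norm]
      exact mul_le_mul_of_nonneg_left (hM _) (norm_nonneg z)
    have h0 : ‖(0:Y)‖ • f (sphProj y 0) = 0 := by simp
    rw [ContinuousAt, h0]
    exact ht
  · have hval : ContinuousAt (fun z : Y => ((sphProj y z : Y))) z₀ := by
      have hc : ContinuousAt (fun z : Y => ‖z‖⁻¹ • z) z₀ :=
        ((continuous_norm.continuousAt).inv₀ (norm_ne_zero_iff.2 h)).smul continuousAt_id
      apply hc.congr
      filter_upwards [isOpen_compl_singleton.mem_nhds h] with z hz
      exact (sphProj_coe y hz).symm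
    have hn : ContinuousAt (sphProj y) z₀ := Topology.IsInducing.subtypeVal.continuousAt_iff.2 hval
    exact continuous_norm.continuousAt.smul (hfc.continuousAt.comp hn)

end Aux

/-- The positively homogeneous extension of a bounded continuous sphere-valued-domain map
that is pointwise `β`-Lipschitz at `y` is continuous and pointwise
`(2β + ‖f‖_∞)`-Lipschitz on the open ray through `y`. -/
theorem stmt10 {Y X : Type*} [NormedAddCommGroup Y] [NormedSpace ℝ Y]
    [NormedAddCommGroup X] [NormedSpace ℝ X]
    (y : Metric.sphere (0 : Y) 1) (β : ℝ) (hβ : 0 < β)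
    (f : Metric.sphere (0 : Y) 1 → X) (hfc : Continuous f)
    (hfb : BddAbove (Set.range fun x => ‖f x‖))
    (hlip : PtwiseLipschitzAt f β y)
    (ρ : Y → X) (hρ0 : ρ 0 = 0)
    (hρ : ∀ z : Y, z ≠ 0 → ∀ w : Metric.sphere (0 : Y) 1,
      (w : Y) = ‖z‖⁻¹ • z → ρ z = ‖z‖ • f w) :
    Continuous ρ ∧
      ∀ z : Y, (∃ l : ℝ, 0 < l ∧ z = l • (y : Y)) →
        PtwiseLipschitzAt ρ (2 * β + ⨆ x, ‖f x‖) z := by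

  classical
  set M : ℝ := ⨆ x, ‖f x‖ with hMdef
  have hMle : ∀ x, ‖f x‖ ≤ M := fun x => le_ciSup hfb x
  have hM0 : 0 ≤ M := (norm_nonneg (f y)).trans (hMle y)
  have hρF : ρ = fun z : Y => ‖z‖ • f (sphProj y z) := by
    funext z
    by_cases h : z = 0
    · simp [h, hρ0]
    · rw [hρ z h (sphProj y z) (sphProj_coe y h)]
  rw [hρF]
  refine ⟨cont_homog_ext y f hfc hfb, ?_⟩
  rintro z ⟨l, hl, rfl⟩
  set F : Y → X := fun z : Y => ‖z‖ • f (sphProj y z) with hF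
  unfold PtwiseLipschitzAt at hlip ⊢
  have hy1 : ‖(y:Y)‖ = 1 := mem_sphere_zero_iff_norm.1 y.2
  have hznorm : ‖l • (y:Y)‖ = l := by
    rw [norm_smul, hy1, mul_one, Real.norm_eq_abs, abs_of_pos hl]
  have hz0 : l • (y:Y) ≠ 0 := by
    intro hcon; rw [hcon, norm_zero] at hznorm; exact hl.ne hznorm
  have hproj_z : sphProj y (l • (y:Y)) = y := by
    apply Subtype.ext
    rw [sphProj_coe y hz0, hznorm, smul_smul, inv_mul_cancel₀ hl.ne', one_smul]
  have hFz : F (l • (y:Y)) = l • f y := by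
    show ‖l • (y:Y)‖ • f (sphProj y (l • (y:Y))) = l • f y
    rw [hznorm, hproj_z]
  set g : ℝ → ℝ≥0∞ := fun s =>
    (ENNReal.ofReal s)⁻¹ * ⨆ w ∈ Metric.closedBall y s, edist (f y) (f w) with hg
  set φ : ℝ → ℝ := fun r => 2 * r / l with hφ
  set gg : ℝ≥0∞ → ℝ≥0∞ := fun x => 2 * x + ENNReal.ofReal M with hgg
  -- eventual estimate
  have h_ev : ∀ᶠ r in 𝓝[>] (0:ℝ),
      (ENNReal.ofReal r)⁻¹ * ⨆ a ∈ Metric.closedBall (l • (y:Y)) r, edist (F (l • (y:Y))) (F a)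
        ≤ gg (g (φ r)) := by
    have hmem : Ioo (0:ℝ) (l/2) ∈ 𝓝[>] (0:ℝ) :=
      Ioo_mem_nhdsGT_of_mem ⟨le_refl 0, by linarith⟩
    filter_upwards [hmem] with r hr
    obtain ⟨hr0, hrl⟩ := hr
    have hφr : 0 < φ r := by simp only [hφ]; positivity
    have hS : (⨆ a ∈ Metric.closedBall (l • (y:Y)) r, edist (F (l • (y:Y))) (F a))
        ≤ ENNReal.ofReal l * (⨆ w ∈ Metric.closedBall y (φ r), edist (f y) (f w))
          + ENNReal.ofReal (r * M) := by
      refine iSup₂_le fun a ha => ?_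
      have hdazr : ‖a - l • (y:Y)‖ ≤ r := by rwa [mem_closedBall, dist_eq_norm] at ha
      have h8 : |l - ‖a‖| ≤ r := by
        have h9 := abs_norm_sub_norm_le (l • (y:Y)) a
        rw [hznorm, norm_sub_rev] at h9
        exact h9.trans hdazr
      have hna : l - r ≤ ‖a‖ := by have := (abs_le.1 h8).2; linarith
      have ha0 : a ≠ 0 := by
        intro h; rw [h, norm_zero] at hna; linarith
      have hwv : (sphProj y a : Y) = ‖a‖⁻¹ • a := sphProj_coe y ha0
      have hwball : sphProj y a ∈ Metric.closedBall y (φ r) := by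
        rw [mem_closedBall, Subtype.dist_eq, dist_eq_norm]
        have h10 := normalize_sub_le hz0 ha0
        have hyz : (y:Y) = ‖l • (y:Y)‖⁻¹ • (l • (y:Y)) := by
          rw [← sphProj_coe y hz0, hproj_z]
        rw [← hyz, hznorm] at h10
        calc ‖(sphProj y a : Y) - (y:Y)‖ = ‖(y:Y) - (sphProj y a : Y)‖ := norm_sub_rev _ _
          _ = ‖(y:Y) - ‖a‖⁻¹ • a‖ := by rw [hwv]
          _ ≤ 2 * ‖l • (y:Y) - a‖ / l := h10
          _ = 2 * ‖a - l • (y:Y)‖ / l := by rw [norm_sub_rev]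
          _ ≤ 2 * r / l := by gcongr
          _ = φ r := rfl
      have hkey : ‖F (l • (y:Y)) - F a‖ ≤ l * ‖f y - f (sphProj y a)‖ + r * M := by
        rw [hFz]
        show ‖l • f y - ‖a‖ • f (sphProj y a)‖ ≤ _
        have hsplit : l • f y - ‖a‖ • f (sphProj y a)
            = l • (f y - f (sphProj y a)) + (l - ‖a‖) • f (sphProj y a) := by
          rw [smul_sub, sub_smul]; abel
        rw [hsplit]
        have h11 := norm_add_le (l • (f y - f (sphProj y a))) ((l - ‖a‖) • f (sphProj y a))
        rw [norm_smul, norm_smul, Real.norm_eq_abs, Real.norm_eq_abs, abs_of_pos hl] at h11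
        have hb : |l - ‖a‖| * ‖f (sphProj y a)‖ ≤ r * M :=
          mul_le_mul h8 (hMle _) (norm_nonneg _) hr0.le
        linarith
      calc edist (F (l • (y:Y))) (F a) = ENNReal.ofReal ‖F (l • (y:Y)) - F a‖ := by
            rw [edist_dist, dist_eq_norm]
        _ ≤ ENNReal.ofReal (l * ‖f y - f (sphProj y a)‖ + r * M) :=
            ENNReal.ofReal_le_ofReal hkey
        _ = ENNReal.ofReal l * ENNReal.ofReal ‖f y - f (sphProj y a)‖
              + ENNReal.ofReal (r * M) := by
            rw [ENNReal.ofReal_add (by positivity) (by positivity), ENNReal.ofReal_mul hl.le]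
        _ ≤ ENNReal.ofReal l * (⨆ w ∈ Metric.closedBall y (φ r), edist (f y) (f w))
              + ENNReal.ofReal (r * M) := by
            gcongr
            rw [← dist_eq_norm, ← edist_dist]
            exact le_biSup (fun w => edist (f y) (f w)) hwball
    have hrne : ENNReal.ofReal r ≠ 0 := (ENNReal.ofReal_pos.2 hr0).ne'
    have hscale : (ENNReal.ofReal r)⁻¹ * ENNReal.ofReal l = 2 * (ENNReal.ofReal (φ r))⁻¹ := by
      rw [← ENNReal.ofReal_inv_of_pos hr0, ← ENNReal.ofReal_inv_of_pos hφr,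
        ← ENNReal.ofReal_mul (by positivity), ← ENNReal.ofReal_ofNat 2,
        ← ENNReal.ofReal_mul (by norm_num)]
      congr 1
      have : φ r = 2 * r / l := rfl
      rw [this]
      field_simp
    calc (ENNReal.ofReal r)⁻¹ * ⨆ a ∈ Metric.closedBall (l • (y:Y)) r, edist (F (l • (y:Y))) (F a)
        ≤ (ENNReal.ofReal r)⁻¹ * (ENNReal.ofReal l
            * (⨆ w ∈ Metric.closedBall y (φ r), edist (f y) (f w))
            + ENNReal.ofReal (r * M)) := mul_le_mul_right hS _
      _ = ((ENNReal.ofReal r)⁻¹ * ENNReal.ofReal l)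
            * (⨆ w ∈ Metric.closedBall y (φ r), edist (f y) (f w))
            + (ENNReal.ofReal r)⁻¹ * (ENNReal.ofReal r * ENNReal.ofReal M) := by
          rw [mul_add, ← mul_assoc, ENNReal.ofReal_mul hr0.le]
      _ = 2 * ((ENNReal.ofReal (φ r))⁻¹
            * (⨆ w ∈ Metric.closedBall y (φ r), edist (f y) (f w))) + ENNReal.ofReal M := by
          rw [hscale, mul_assoc, ← mul_assoc (ENNReal.ofReal r)⁻¹,
            ENNReal.inv_mul_cancel hrne ENNReal.ofReal_ne_top, one_mul]
      _ = gg (g (φ r)) := rfl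
  have hL : limsup
      (fun r : ℝ => (ENNReal.ofReal r)⁻¹
        * ⨆ a ∈ Metric.closedBall (l • (y:Y)) r, edist (F (l • (y:Y))) (F a)) (𝓝[>] (0:ℝ))
      ≤ limsup (fun r => gg (g (φ r))) (𝓝[>] (0:ℝ)) := limsup_le_limsup h_ev
  refine hL.trans ?_
  have hmono : Monotone gg := fun u v huv => add_le_add_left (mul_le_mul_right huv 2) _
  have hcontgg : Continuous gg := by
    have h2t : (2:ℝ≥0∞) ≠ ⊤ := by norm_num
    exact (ENNReal.continuous_const_mul h2t).add continuous_const
  have heq : limsup (fun r => gg (g (φ r))) (𝓝[>] (0:ℝ))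
      = gg (limsup (fun r => g (φ r)) (𝓝[>] (0:ℝ))) :=
    (hmono.map_limsup_of_continuousAt (fun r => g (φ r)) hcontgg.continuousAt).symm
  rw [heq]
  have hφt : Tendsto φ (𝓝[>] (0:ℝ)) (𝓝[>] (0:ℝ)) := by
    apply tendsto_nhdsWithin_of_tendsto_nhds_of_eventually_within
    · have hc : Tendsto φ (𝓝 0) (𝓝 0) := by
        have hcp : Continuous φ := by
          rw [hφ]
          exact ((continuous_const (y := (2:ℝ))).mul continuous_id).div_const l
        have := hcp.tendsto 0
        simpa [hφ] using this
      exact hc.mono_left nhdsWithin_le_nhds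
    · filter_upwards [self_mem_nhdsWithin] with r hr
      have hr0 : (0:ℝ) < r := hr
      show φ r ∈ Ioi 0
      have : φ r = 2 * r / l := rfl
      rw [this]
      exact mem_Ioi.2 (by positivity)
  have hgφ : limsup (fun r => g (φ r)) (𝓝[>] (0:ℝ)) ≤ ENNReal.ofReal β := by
    have h1 : limsup (fun r => g (φ r)) (𝓝[>] (0:ℝ)) = limsup g (map φ (𝓝[>] (0:ℝ))) :=
      limsup_comp g φ _
    rw [h1]
    exact (limsup_le_limsup_of_le hφt).trans hlip
  calc gg (limsup (fun r => g (φ r)) (𝓝[>] (0:ℝ))) ≤ gg (ENNReal.ofReal β) := hmono hgφ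
    _ = ENNReal.ofReal (2 * β + M) := by
        show 2 * ENNReal.ofReal β + ENNReal.ofReal M = _
        rw [ENNReal.ofReal_add (by positivity) hM0,
          ENNReal.ofReal_mul (by norm_num : (0:ℝ) ≤ 2), ENNReal.ofReal_ofNat]
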